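/- For every k ≥ 1, vectors u_1, …, u_k ∈ [0, 1]^N with U_i = diag(u_i), and matrices T_1, …, T_{k−1} ∈ ℝ^{N×N}, we have ‖U_1 T_1 U_2 T_2 ⋯ T_{k−1} U_k 𝟏‖_1 ≤ √(‖u_1‖_1 · ‖u_k‖_1) · ∏_{i=1}^{k−1} ‖T_i‖, where ‖v‖_1 = (|v_1| + ⋯ + |v_N|)/N is the normalized 1-norm, 𝟏 is the all-ones vector, diag(u) is the diagonal matrix with diagonal entries u, and ‖T‖ is the operator norm of T with respect to the Euclidean norm. -/

import Mathlib

open Finset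

/-- The normalized 1-norm of a vector: `(|v_1| + ⋯ + |v_N|)/N`. -/
noncomputable def norm1 {N : Type*} [Fintype N] (v : N → ℝ) : ℝ :=
  (∑ i, |v i|) / (Fintype.card N : ℝ)

/-- The operator norm of a matrix with respect to the Euclidean norm. -/
noncomputable def opNorm {N : Type*} [Fintype N] [DecidableEq N]
    (M : Matrix N N ℝ) : ℝ :=
  ‖LinearMap.toContinuousLinearMap (Matrix.toEuclideanLin M)‖

/-- The alternating product `U_0 T_0 U_1 T_1 ⋯ T_{m-1} U_m` of `m + 1` matrices `U_i`
with `m` matrices `T_i` interspersed between consecutive factors. -/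
noncomputable def altProd {N : Type*} [Fintype N] [DecidableEq N] :
    (m : ℕ) → (Fin (m + 1) → Matrix N N ℝ) → (Fin m → Matrix N N ℝ) → Matrix N N ℝ
  | 0, U, _ => U 0
  | m + 1, U, T => U 0 * T 0 * altProd m (fun i => U i.succ) (fun i => T i.succ)

noncomputable def euc {N : Type*} [Fintype N] (x : N → ℝ) : ℝ := Real.sqrt (∑ i, x i ^ 2)

lemma euc_nonneg {N : Type*} [Fintype N] (x : N → ℝ) : 0 ≤ euc x := Real.sqrt_nonneg _

lemma euc_mulVec_le {N : Type*} [Fintype N] [DecidableEq N] (M : Matrix N N ℝ) (x : N → ℝ) :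
    euc (M.mulVec x) ≤ opNorm M * euc x := by
  have h := (LinearMap.toContinuousLinearMap (Matrix.toEuclideanLin M)).le_opNorm
    ((WithLp.equiv 2 (N → ℝ)).symm x)
  simp only [LinearMap.coe_toContinuousLinearMap', WithLp.equiv_symm_apply, Matrix.toEuclideanLin_toLp,
    Matrix.toLin'_apply] at h
  rw [EuclideanSpace.norm_eq, EuclideanSpace.norm_eq] at h
  simp only [PiLp.toLp_apply, Real.norm_eq_abs, sq_abs] at h
  unfold euc opNorm
  exact h

lemma opNorm_nonneg' {N : Type*} [Fintype N] [DecidableEq N] (M : Matrix N N ℝ) :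
    0 ≤ opNorm M := norm_nonneg _

lemma opNorm_diag_le_one {N : Type*} [Fintype N] [DecidableEq N]
    (v : N → ℝ) (hv : ∀ j, v j ∈ Set.Icc (0 : ℝ) 1) :
    opNorm (Matrix.diagonal v) ≤ 1 := by
  refine ContinuousLinearMap.opNorm_le_bound _ zero_le_one fun x => ?_
  simp only [LinearMap.coe_toContinuousLinearMap', one_mul]
  rw [EuclideanSpace.norm_eq, EuclideanSpace.norm_eq]
  apply Real.sqrt_le_sqrt
  apply Finset.sum_le_sum
  intro i _
  have hx : Matrix.toEuclideanLin (Matrix.diagonal v) x i = v i * x i := by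
    have : x = (WithLp.equiv 2 (N → ℝ)).symm ((WithLp.equiv 2 (N → ℝ)) x) := rfl
    rw [this, WithLp.equiv_symm_apply, Matrix.toEuclideanLin_toLp, Matrix.toLin'_apply]
    simp [Matrix.mulVec_diagonal]
  rw [hx]
  have h0 := (hv i).1
  have h1 := (hv i).2
  have : |v i * x i| ≤ |x i| := by
    rw [abs_mul, abs_of_nonneg h0]
    nlinarith [abs_nonneg (x i)]
  calc |v i * x i| ^ 2 ≤ |x i| ^ 2 := by nlinarith [abs_nonneg (v i * x i)]
    _ = ‖x i‖ ^ 2 := rfl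

/-- Euclidean bound on the full alternating chain applied to the ones vector. -/
lemma chain_euc_bound {N : Type*} [Fintype N] [DecidableEq N] :
    ∀ (m : ℕ) (u : Fin (m + 1) → N → ℝ), (∀ i j, u i j ∈ Set.Icc (0 : ℝ) 1) →
    ∀ (T : Fin m → Matrix N N ℝ),
    euc ((altProd m (fun i => Matrix.diagonal (u i)) T).mulVec fun _ => (1 : ℝ)) ≤
      (∏ i, opNorm (T i)) * Real.sqrt (∑ j, u (Fin.last m) j) := by
  intro m
  induction m with
  | zero =>
    intro u hu T
    simp only [altProd, Finset.univ_eq_empty, Finset.prod_empty, one_mul]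
    rw [show (Fin.last 0) = 0 from rfl]
    unfold euc
    apply Real.sqrt_le_sqrt
    apply Finset.sum_le_sum
    intro j _
    have := hu 0 j
    simp only [Matrix.mulVec_diagonal, mul_one]
    nlinarith [this.1, this.2]
  | succ n ih =>
    intro u hu T
    have hrec : altProd (n+1) (fun i => Matrix.diagonal (u i)) T =
        Matrix.diagonal (u 0) * T 0 *
          altProd n (fun i => Matrix.diagonal (u i.succ)) (fun i => T i.succ) := rfl
    rw [hrec]
    set P := altProd n (fun i => Matrix.diagonal (u i.succ)) (fun i => T i.succ) with hP
    have h1 : (Matrix.diagonal (u 0) * T 0 * P).mulVec (fun _ => (1:ℝ)) =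
        (Matrix.diagonal (u 0)).mulVec ((T 0).mulVec (P.mulVec fun _ => (1:ℝ))) := by
      rw [Matrix.mulVec_mulVec, Matrix.mulVec_mulVec]
    rw [h1]
    have hih := ih (fun i => u i.succ) (fun i j => hu i.succ j) (fun i => T i.succ)
    have h2 := euc_mulVec_le (Matrix.diagonal (u 0)) ((T 0).mulVec (P.mulVec fun _ => (1:ℝ)))
    have h3 := euc_mulVec_le (T 0) (P.mulVec fun _ => (1:ℝ))
    have hd := opNorm_diag_le_one (u 0) (hu 0)
    have hlast : (Fin.last n).succ = Fin.last (n + 1) := Fin.succ_last n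
    rw [hlast] at hih
    calc euc ((Matrix.diagonal (u 0)).mulVec ((T 0).mulVec (P.mulVec fun _ => (1:ℝ))))
        ≤ opNorm (Matrix.diagonal (u 0)) * euc ((T 0).mulVec (P.mulVec fun _ => (1:ℝ))) := h2
      _ ≤ 1 * euc ((T 0).mulVec (P.mulVec fun _ => (1:ℝ))) := by
          apply mul_le_mul_of_nonneg_right hd (euc_nonneg _)
      _ = euc ((T 0).mulVec (P.mulVec fun _ => (1:ℝ))) := one_mul _
      _ ≤ opNorm (T 0) * euc (P.mulVec fun _ => (1:ℝ)) := h3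
      _ ≤ opNorm (T 0) * ((∏ i : Fin n, opNorm (T i.succ)) * Real.sqrt (∑ j, u (Fin.last (n+1)) j)) := by
          apply mul_le_mul_of_nonneg_left hih (opNorm_nonneg' _)
      _ = (∏ i, opNorm (T i)) * Real.sqrt (∑ j, u (Fin.last (n+1)) j) := by
          rw [Fin.prod_univ_succ]; ring


lemma key_cs {N : Type*} [Fintype N] (v : N → ℝ) (hv : ∀ j, v j ∈ Set.Icc (0 : ℝ) 1)
    (w : N → ℝ) : ∑ i, v i * |w i| ≤ Real.sqrt (∑ j, v j) * euc w := by
  have CS := Finset.sum_mul_sq_le_sq_mul_sq Finset.univ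
    (fun i => Real.sqrt (v i)) (fun i => Real.sqrt (v i) * |w i|)
  have h0 : ∀ i, (0:ℝ) ≤ v i := fun i => (hv i).1
  have e1 : ∀ i, Real.sqrt (v i) * (Real.sqrt (v i) * |w i|) = v i * |w i| := by
    intro i; rw [← mul_assoc, Real.mul_self_sqrt (h0 i)]
  have e2 : ∀ i, Real.sqrt (v i) ^ 2 = v i := fun i => Real.sq_sqrt (h0 i)
  have e3 : ∀ i, (Real.sqrt (v i) * |w i|) ^ 2 = v i * |w i| ^ 2 := by
    intro i; rw [mul_pow, e2]
  simp only [e1, e2, e3] at CS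
  have hle : ∑ i, v i * |w i| ^ 2 ≤ ∑ i, w i ^ 2 := by
    apply Finset.sum_le_sum; intro i _
    rw [sq_abs]; nlinarith [(hv i).1, (hv i).2, sq_nonneg (w i)]
  have hsum0 : (0:ℝ) ≤ ∑ i, v i * |w i| := by
    apply Finset.sum_nonneg; intro i _; exact mul_nonneg (h0 i) (abs_nonneg _)
  have CS2 : (∑ i, v i * |w i|) ^ 2 ≤ (∑ j, v j) * ∑ i, w i ^ 2 :=
    le_trans CS (by
      apply mul_le_mul_of_nonneg_left hle (Finset.sum_nonneg fun i _ => h0 i))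
  calc ∑ i, v i * |w i| = Real.sqrt ((∑ i, v i * |w i|) ^ 2) := (Real.sqrt_sq hsum0).symm
    _ ≤ Real.sqrt ((∑ j, v j) * ∑ i, w i ^ 2) := Real.sqrt_le_sqrt CS2
    _ = Real.sqrt (∑ j, v j) * euc w := by
        rw [Real.sqrt_mul (Finset.sum_nonneg fun i _ => h0 i)]; rfl

theorem diag_chain_norm1_bound {N : Type*} [Fintype N] [DecidableEq N] [Nonempty N]
    (m : ℕ) (u : Fin (m + 1) → N → ℝ) (hu : ∀ i j, u i j ∈ Set.Icc (0 : ℝ) 1)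
    (T : Fin m → Matrix N N ℝ) :
    norm1 ((altProd m (fun i => Matrix.diagonal (u i)) T).mulVec fun _ => (1 : ℝ)) ≤
      Real.sqrt (norm1 (u 0) * norm1 (u (Fin.last m))) * ∏ i, opNorm (T i) := by
  have c0 : (0:ℝ) < (Fintype.card N : ℝ) := by
    exact_mod_cast Fintype.card_pos
  have hn1 : ∀ i : Fin (m+1), norm1 (u i) = (∑ j, u i j) / (Fintype.card N : ℝ) := by
    intro i; unfold norm1; congr 1
    exact Finset.sum_congr rfl fun j _ => abs_of_nonneg (hu i j).1
  have hK : (0:ℝ) ≤ ∏ i, opNorm (T i) :=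
    Finset.prod_nonneg fun i _ => opNorm_nonneg' (T i)
  cases m with
  | zero =>
    simp only [altProd, Finset.univ_eq_empty, Finset.prod_empty, mul_one]
    have hv : (Matrix.diagonal (u 0)).mulVec (fun _ => (1:ℝ)) = u 0 := by
      funext j; simp [Matrix.mulVec_diagonal]
    rw [hv, show (Fin.last 0) = 0 from rfl]
    have : (0:ℝ) ≤ norm1 (u 0) := by
      rw [hn1 0]
      exact div_nonneg (Finset.sum_nonneg fun j _ => (hu 0 j).1) c0.le
    exact (Real.sqrt_mul_self this).symm.le
  | succ n =>
    have hrec : altProd (n+1) (fun i => Matrix.diagonal (u i)) T =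
        Matrix.diagonal (u 0) * T 0 *
          altProd n (fun i => Matrix.diagonal (u i.succ)) (fun i => T i.succ) := rfl
    set P := altProd n (fun i => Matrix.diagonal (u i.succ)) (fun i => T i.succ) with hP
    set w := (T 0).mulVec (P.mulVec fun _ => (1:ℝ)) with hw
    have h1 : (altProd (n+1) (fun i => Matrix.diagonal (u i)) T).mulVec (fun _ => (1:ℝ)) =
        (Matrix.diagonal (u 0)).mulVec w := by
      rw [hrec, hw, Matrix.mulVec_mulVec, Matrix.mulVec_mulVec]
    rw [h1]
    -- bound on euc w
    have hchain := chain_euc_bound n (fun i => u i.succ) (fun i j => hu i.succ j)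
      (fun i => T i.succ)
    have h3 := euc_mulVec_le (T 0) (P.mulVec fun _ => (1:ℝ))
    have hlast : (Fin.last n).succ = Fin.last (n + 1) := Fin.succ_last n
    rw [hlast] at hchain
    have hwb : euc w ≤ opNorm (T 0) *
        ((∏ i : Fin n, opNorm (T i.succ)) * Real.sqrt (∑ j, u (Fin.last (n+1)) j)) :=
      le_trans h3 (mul_le_mul_of_nonneg_left hchain (opNorm_nonneg' _))
    -- numerator bound
    have habs : ∀ i, |(Matrix.diagonal (u 0)).mulVec w i| = u 0 i * |w i| := by
      intro i
      rw [Matrix.mulVec_diagonal, abs_mul, abs_of_nonneg (hu 0 i).1]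
    have hnum : ∑ i, |(Matrix.diagonal (u 0)).mulVec w i| ≤
        Real.sqrt (∑ j, u 0 j) * euc w := by
      calc ∑ i, |(Matrix.diagonal (u 0)).mulVec w i| = ∑ i, u 0 i * |w i| := by
            exact Finset.sum_congr rfl fun i _ => habs i
        _ ≤ Real.sqrt (∑ j, u 0 j) * euc w := key_cs (u 0) (hu 0) w
    have hS0 : (0:ℝ) ≤ ∑ j, u 0 j := Finset.sum_nonneg fun j _ => (hu 0 j).1
    have hSL : (0:ℝ) ≤ ∑ j, u (Fin.last (n+1)) j :=
      Finset.sum_nonneg fun j _ => (hu _ j).1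
    have hnum2 : ∑ i, |(Matrix.diagonal (u 0)).mulVec w i| ≤
        Real.sqrt (∑ j, u 0 j) * Real.sqrt (∑ j, u (Fin.last (n+1)) j) *
          ∏ i, opNorm (T i) := by
      refine le_trans hnum (le_trans
        (mul_le_mul_of_nonneg_left hwb (Real.sqrt_nonneg _)) (le_of_eq ?_))
      rw [Fin.prod_univ_succ]; ring
    -- conclude
    have hrhs : Real.sqrt (norm1 (u 0) * norm1 (u (Fin.last (n+1)))) =
        Real.sqrt (∑ j, u 0 j) * Real.sqrt (∑ j, u (Fin.last (n+1)) j) /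
          (Fintype.card N : ℝ) := by
      rw [hn1 0, hn1 (Fin.last (n+1)), div_mul_div_comm,
        Real.sqrt_div (mul_nonneg hS0 hSL), Real.sqrt_mul hS0,
        Real.sqrt_mul_self c0.le]
    have hL : norm1 ((Matrix.diagonal (u 0)).mulVec w) =
        (∑ i, |(Matrix.diagonal (u 0)).mulVec w i|) / (Fintype.card N : ℝ) := rfl
    rw [hrhs, hL, div_le_iff₀ c0]
    have hfin : Real.sqrt (∑ j, u 0 j) * Real.sqrt (∑ j, u (Fin.last (n+1)) j) /
          (Fintype.card N : ℝ) * (∏ i, opNorm (T i)) * (Fintype.card N : ℝ) =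
        Real.sqrt (∑ j, u 0 j) * Real.sqrt (∑ j, u (Fin.last (n+1)) j) *
          ∏ i, opNorm (T i) := by
      field_simp
    rw [hfin]
    exact hnum2
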